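/- For any root basis (V, ⟨·,·⟩, Π) of a Coxeter graph Γ with Coxeter system (W,S), the map S → GL(V), s ↦ f_s (where f_s(x) = x − 2⟨x,ε_s⟩ε_s) extends to a group homomorphism f: W → GL(V), and this homomorphism is injective (i.e., the rooted representation is faithful). -/

import Mathlib

noncomputable section

open Real

namespace CoxeterFixedPoints

/-- `(V, B, ε)` is a root basis of the Coxeter graph whose Coxeter matrix is `M`
(the entry `0` of a Coxeter matrix stands for `∞`). -/
def IsRootBasis {S V : Type*} [AddCommGroup V] [Module ℝ V]
    (M : CoxeterMatrix S) (B : V →ₗ[ℝ] V →ₗ[ℝ] ℝ) (ε : S → V) : Prop :=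
  (∀ x y : V, B x y = B y x) ∧
  (∀ s : S, B (ε s) (ε s) = 1) ∧
  (∀ s t : S, s ≠ t → M s t ≠ 0 →
    B (ε s) (ε t) = - Real.cos (Real.pi / (M s t : ℝ))) ∧
  (∀ s t : S, s ≠ t → M s t = 0 → B (ε s) (ε t) ≤ -1) ∧
  (∃ χ : V →ₗ[ℝ] ℝ, ∀ s : S, 0 < χ (ε s))

/-- The standard parabolic subgroup `W_X` of `W` generated by `X ⊆ S`. -/
def parabolic {S W : Type*} [Group W] {M : CoxeterMatrix S} (cs : CoxeterSystem M W)
    (X : Set S) : Subgroup W :=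
  Subgroup.closure (cs.simple '' X)

/-- `w` is the longest element of the standard parabolic subgroup `W_X`. -/
def IsLongestElement {S W : Type*} [Group W] {M : CoxeterMatrix S} (cs : CoxeterSystem M W)
    (X : Set S) (w : W) : Prop :=
  w ∈ parabolic cs X ∧ ∀ u ∈ parabolic cs X, cs.length u ≤ cs.length w

/-- `X ∈ 𝒮`, i.e. `X` is an orbit of `G` in `S` such that `W_X` is finite. -/
def IsFinOrbit {S W : Type*} [Group W] {M : CoxeterMatrix S} (cs : CoxeterSystem M W)
    (G : Type*) [Group G] [MulAction G S] (X : Set S) : Prop :=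
  (∃ s : S, X = MulAction.orbit G s) ∧ ((parabolic cs X : Set W)).Finite

/-- `a_X = Σ_{s ∈ X} ε_s`. -/
def aVec {S V : Type*} [AddCommGroup V] [Module ℝ V] (ε : S → V) (X : Set S) : V :=
  ∑ᶠ s ∈ X, ε s

/-- `ε̃_X = a_X / ⟨a_X, a_X⟩^{1/2}`. -/
def epsTilde {S V : Type*} [AddCommGroup V] [Module ℝ V]
    (B : V →ₗ[ℝ] V →ₗ[ℝ] ℝ) (ε : S → V) (X : Set S) : V :=
  (Real.sqrt (B (aVec ε X) (aVec ε X)))⁻¹ • aVec ε X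

/-- There is no edge of the Coxeter graph of `M` between a vertex of `X` and a
(distinct) vertex of `Y`. -/
def NoEdges {S : Type*} (M : CoxeterMatrix S) (X Y : Set S) : Prop :=
  ∀ s ∈ X, ∀ t ∈ Y, s ≠ t → M s t = 2

/-- `X` is of type I : `Γ_X` has no edge. -/
def TypeI {S : Type*} (M : CoxeterMatrix S) (X : Set S) : Prop :=
  ∀ s ∈ X, ∀ t ∈ X, s ≠ t → M s t = 2

/-- `X` is of type II_m : `X` is partitioned into pairs `{s, ι s}` with `m_{s, ι s} = m ≥ 3`
(`m` finite), and `m_{s,t} = 2` for `s, t ∈ X` not belonging to a common pair. -/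
def TypeII {S : Type*} (M : CoxeterMatrix S) (X : Set S) (m : ℕ) : Prop :=
  3 ≤ m ∧ ∃ ι : S → S,
    (∀ s ∈ X, ι s ∈ X ∧ ι s ≠ s ∧ ι (ι s) = s ∧ M s (ι s) = m) ∧
    (∀ s ∈ X, ∀ t ∈ X, t ≠ s → t ≠ ι s → M s t = 2)

/-- `Γ_{X ∪ Y}` is a disjoint union of single edges with label `m ≥ 3` (possibly `m = ∞`,
encoded by `0`), each edge joining a vertex of `X` to a vertex of `Y` :
bi-orbit of type (1). -/
def BiOrbit1 {S : Type*} (M : CoxeterMatrix S) (X Y : Set S) (m : ℕ) : Prop :=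
  (m = 0 ∨ 3 ≤ m) ∧
  ∃ σ : S → S, Set.BijOn σ X Y ∧
    (∀ x ∈ X, M x (σ x) = m) ∧
    (∀ x ∈ X, ∀ y ∈ Y, y ≠ σ x → M x y = 2) ∧
    NoEdges M X X ∧ NoEdges M Y Y

/-- `Γ_{E ∪ C}` is a disjoint union of paths `a − b − c` with both labels `3`, whose end
vertices lie in `E` and whose middle vertex lies in `C` : bi-orbit of type (2)
(in one of the two orientations). -/
def BiOrbit2 {S : Type*} (M : CoxeterMatrix S) (E C : Set S) : Prop :=
  ∃ τ : S → S, Set.MapsTo τ E C ∧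
    (∀ c ∈ C, {e | e ∈ E ∧ τ e = c}.ncard = 2) ∧
    (∀ e ∈ E, M e (τ e) = 3) ∧
    (∀ e ∈ E, ∀ c ∈ C, c ≠ τ e → M e c = 2) ∧
    NoEdges M E E ∧ NoEdges M C C

/-- `Γ_{D ∪ C}` is a disjoint union of paths `a − b − c − d` with `a, d ∈ D`, `b, c ∈ C`,
outer labels `3` and middle label `mid` : used for bi-orbits of types (3) and (4). -/
def BiOrbitPath {S : Type*} (M : CoxeterMatrix S) (D C : Set S) (mid : ℕ) : Prop :=
  ∃ σ ι : S → S, Set.BijOn σ D C ∧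
    (∀ c ∈ C, ι c ∈ C ∧ ι c ≠ c ∧ ι (ι c) = c ∧ M c (ι c) = mid) ∧
    (∀ d ∈ D, M d (σ d) = 3) ∧
    (∀ d ∈ D, ∀ c ∈ C, c ≠ σ d → M d c = 2) ∧
    (∀ c ∈ C, ∀ c' ∈ C, c' ≠ c → c' ≠ ι c → M c c' = 2) ∧
    NoEdges M D D

/-- Bi-orbit of type (3) : paths `a − b − c − d` with all labels `3`. -/
def BiOrbit3 {S : Type*} (M : CoxeterMatrix S) (D C : Set S) : Prop :=
  BiOrbitPath M D C 3

/-- Bi-orbit of type (4) : paths `a − b − c − d` with labels `3, 4, 3`. -/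
def BiOrbit4 {S : Type*} (M : CoxeterMatrix S) (D C : Set S) : Prop :=
  BiOrbitPath M D C 4

/-- `Γ_{L ∪ C}` is a disjoint union of stars with center in `C`, three leaves in `L`
and all labels `3` : bi-orbit of type (5) (in one of the two orientations). -/
def BiOrbit5 {S : Type*} (M : CoxeterMatrix S) (L C : Set S) : Prop :=
  ∃ τ : S → S, Set.MapsTo τ L C ∧
    (∀ c ∈ C, {l | l ∈ L ∧ τ l = c}.ncard = 3) ∧
    (∀ l ∈ L, M l (τ l) = 3) ∧
    (∀ l ∈ L, ∀ c ∈ C, c ≠ τ l → M l c = 2) ∧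
    NoEdges M L L ∧ NoEdges M C C

/-- `m` is the entry `m̃_{X,Y}` of the Coxeter matrix `M̃` of `Γ̃` (`0` stands for `∞`). -/
def TildeMIs {S : Type*} (M : CoxeterMatrix S) (X Y : Set S) (m : ℕ) : Prop :=
  (X = Y ∧ m = 1) ∨
  (X ≠ Y ∧
    ((NoEdges M X Y ∧ m = 2) ∨
     (¬ NoEdges M X Y ∧
       ((BiOrbit1 M X Y m ∨ BiOrbit1 M Y X m) ∨
        ((BiOrbit2 M X Y ∨ BiOrbit2 M Y X) ∧ m = 4) ∨
        ((BiOrbit3 M X Y ∨ BiOrbit3 M Y X) ∧ m = 4) ∨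
        ((BiOrbit4 M X Y ∨ BiOrbit4 M Y X) ∧ m = 8) ∨
        ((BiOrbit5 M X Y ∨ BiOrbit5 M Y X) ∧ m = 6) ∨
        ((∀ k : ℕ, ¬ BiOrbit1 M X Y k ∧ ¬ BiOrbit1 M Y X k) ∧
         (¬ BiOrbit2 M X Y ∧ ¬ BiOrbit2 M Y X) ∧
         (¬ BiOrbit3 M X Y ∧ ¬ BiOrbit3 M Y X) ∧
         (¬ BiOrbit4 M X Y ∧ ¬ BiOrbit4 M Y X) ∧
         (¬ BiOrbit5 M X Y ∧ ¬ BiOrbit5 M Y X) ∧ m = 0)))))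

/-- `v_X = |{t ∈ Y | m_{s,t} ≥ 3}|` (including `m_{s,t} = ∞`, encoded by `0`),
for a chosen `s` in the other orbit. -/
def vcount {S : Type*} (M : CoxeterMatrix S) (Y : Set S) (s : S) : ℕ :=
  {t | t ∈ Y ∧ (M s t = 0 ∨ 3 ≤ M s t)}.ncard

/-- `p_X = Σ_{t ∈ Y} ⟨ε_s, ε_t⟩`, for a chosen `s` in the other orbit. -/
def psum {S V : Type*} [AddCommGroup V] [Module ℝ V]
    (B : V →ₗ[ℝ] V →ₗ[ℝ] ℝ) (ε : S → V) (Y : Set S) (s : S) : ℝ :=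
  ∑ᶠ t ∈ Y, B (ε s) (ε t)

/-- The subgroup `W^G` of elements of `W` fixed by the action of `G` on `W`
given by `φ : G →* MulAut W`. -/
def fixedSubgroup {W G : Type*} [Group W] [Group G] (φ : G →* MulAut W) : Subgroup W where
  carrier := {w | ∀ g : G, φ g w = w}
  one_mem' := fun g => map_one (φ g)
  mul_mem' := by
    intro a b ha hb g
    rw [map_mul, ha g, hb g]
  inv_mem' := by
    intro a ha g
    rw [map_inv, ha g]

/-- The subspace `V^G` of vectors of `V` fixed by the action of `G` on `V`
given by `ρ : G →* GL(V)`. -/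
def fixedSubmodule {V G : Type*} [AddCommGroup V] [Module ℝ V] [Group G]
    (ρ : G →* (V ≃ₗ[ℝ] V)) : Submodule ℝ V where
  carrier := {x | ∀ g : G, ρ g x = x}
  zero_mem' := fun g => map_zero (ρ g)
  add_mem' := by
    intro a b ha hb g
    rw [map_add, ha g, hb g]
  smul_mem' := by
    intro c x hx g
    rw [map_smul, hx g]


section TitsAux

open CoxeterSystem Real

variable {S W V : Type*} [Group W] [AddCommGroup V] [Module ℝ V]
variable (B : V →ₗ[ℝ] V →ₗ[ℝ] ℝ) (ε : S → V)

/-- The reflection attached to `s`, as a linear map. -/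
def rmap (s : S) : V →ₗ[ℝ] V :=
  LinearMap.id - (2:ℝ) • (LinearMap.toSpanSingleton ℝ V (ε s)) ∘ₗ (B.flip (ε s))

theorem rmap_apply (s : S) (x : V) : rmap B ε s x = x - (2 * B x (ε s)) • ε s := by
  simp [rmap, LinearMap.toSpanSingleton_apply, smul_smul]

theorem rmap_rmap (h1 : ∀ s, B (ε s) (ε s) = 1) (s : S) (x : V) :
    rmap B ε s (rmap B ε s x) = x := by
  simp only [rmap_apply, map_sub, map_smul, LinearMap.sub_apply, LinearMap.smul_apply,
    smul_eq_mul, h1]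
  match_scalars <;> ring

variable (h1 : ∀ s, B (ε s) (ε s) = 1)

/-- The reflection attached to `s`, as a linear automorphism. -/
def rrefl (s : S) : V ≃ₗ[ℝ] V :=
  LinearEquiv.ofLinear (rmap B ε s) (rmap B ε s)
    (by ext x; exact rmap_rmap B ε h1 s x) (by ext x; exact rmap_rmap B ε h1 s x)

theorem rrefl_apply (s : S) (x : V) : rrefl B ε h1 s x = x - (2 * B x (ε s)) • ε s :=
  rmap_apply B ε s x

theorem equiv_mul_apply (e₁ e₂ : V ≃ₗ[ℝ] V) (x : V) : (e₁ * e₂) x = e₁ (e₂ x) := rfl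

theorem equiv_one_apply (x : V) : (1 : V ≃ₗ[ℝ] V) x = x := rfl

theorem pow_fix (e : V ≃ₗ[ℝ] V) (x : V) (h : e x = x) (k : ℕ) : (e ^ k) x = x := by
  induction k with
  | zero => rfl
  | succ k ih => rw [pow_succ', equiv_mul_apply, ih, h]

theorem rrefl_mul_self (s : S) : rrefl B ε h1 s * rrefl B ε h1 s = 1 := by
  apply LinearEquiv.toLinearMap_injective
  apply LinearMap.ext
  intro x
  exact rmap_rmap B ε h1 s x

/-- The product of the reflections attached to a word. -/
def Fw (ω : List S) : V ≃ₗ[ℝ] V := (ω.map (rrefl B ε h1)).prod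

theorem Fw_nil : Fw B ε h1 ([] : List S) = 1 := rfl

theorem Fw_cons_mul (i : S) (ω : List S) :
    Fw B ε h1 (i :: ω) = rrefl B ε h1 i * Fw B ε h1 ω := by
  simp [Fw]

theorem Fw_cons (i : S) (ω : List S) (x : V) :
    Fw B ε h1 (i :: ω) x = rrefl B ε h1 i (Fw B ε h1 ω x) := by
  rw [Fw_cons_mul, equiv_mul_apply]

theorem Fw_alt_trig (s t : S) (θ : ℝ)
    (hst : B (ε s) (ε t) = - Real.cos θ) (hts : B (ε t) (ε s) = - Real.cos θ)
    (hθ : Real.sin θ ≠ 0) (n : ℕ) :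
    Fw B ε h1 (alternatingWord s t n) (ε s) =
      if Even n
      then (sin ((n+1) * θ) / sin θ) • ε s + (sin (n * θ) / sin θ) • ε t
      else (sin (n * θ) / sin θ) • ε s + (sin ((n+1) * θ) / sin θ) • ε t := by
  induction n with
  | zero =>
    rw [show alternatingWord s t 0 = [] from rfl, Fw_nil, if_pos Even.zero]
    norm_num [div_self hθ]
  | succ n ih =>
    have k1 : sin (((n:ℝ)+1+1) * θ) = 2*cos θ*sin (((n:ℝ)+1)*θ) - sin ((n:ℝ)*θ) := by
      have h2 : ((n:ℝ)+1+1)*θ = ((n:ℝ)+1)*θ + θ := by ring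
      have h0 : ((n:ℝ))*θ = ((n:ℝ)+1)*θ - θ := by ring
      rw [h2, sin_add, h0, sin_sub]
      ring
    rw [alternatingWord_succ', Fw_cons, ih]
    by_cases hn : Even n
    · rw [if_pos hn, if_pos hn, if_neg (by simp [Nat.even_add_one, hn]), rrefl_apply]
      simp only [map_add, map_smul, LinearMap.add_apply, LinearMap.smul_apply, smul_eq_mul,
        hst, hts, h1]
      match_scalars
      · push_cast; ring
      · push_cast
        linear_combination - k1 / sin θ
    · rw [if_neg hn, if_neg hn, if_pos (by simpa [Nat.even_add_one] using hn), rrefl_apply]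
      simp only [map_add, map_smul, LinearMap.add_apply, LinearMap.smul_apply, smul_eq_mul,
        hst, hts, h1]
      match_scalars
      · push_cast
        linear_combination - k1 / sin θ
      · push_cast; ring

theorem Fw_alt_inf (s t : S)
    (hst : B (ε s) (ε t) ≤ -1) (hts : B (ε t) (ε s) ≤ -1) (n : ℕ) :
    ∃ a b : ℝ, Fw B ε h1 (alternatingWord s t n) (ε s) = a • ε s + b • ε t ∧
      0 ≤ a ∧ 0 ≤ b ∧ (if Even n then b ≤ a else a ≤ b) := by
  induction n with
  | zero =>
    refine ⟨1, 0, ?_, by norm_num, by norm_num, by simp⟩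
    rw [show alternatingWord s t 0 = [] from rfl, Fw_nil]
    simp [equiv_one_apply]
  | succ n ih =>
    obtain ⟨a, b, hab, ha, hb, hle⟩ := ih
    rw [alternatingWord_succ']
    by_cases hn : Even n
    · rw [if_pos hn] at hle ⊢
      refine ⟨a, - (2 * (a * B (ε s) (ε t) + b)) + b, ?_, ha, by nlinarith, ?_⟩
      · rw [Fw_cons, hab, rrefl_apply]
        simp only [map_add, map_smul, LinearMap.add_apply, LinearMap.smul_apply, smul_eq_mul, h1]
        match_scalars <;> ring
      · rw [if_neg (by simp [Nat.even_add_one, hn])]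
        nlinarith
    · rw [if_neg hn] at hle ⊢
      refine ⟨- (2 * (a + b * B (ε t) (ε s))) + a, b, ?_, by nlinarith, hb, ?_⟩
      · rw [Fw_cons, hab, rrefl_apply]
        simp only [map_add, map_smul, LinearMap.add_apply, LinearMap.smul_apply, smul_eq_mul, h1]
        match_scalars <;> ring
      · rw [if_pos (by simpa [Nat.even_add_one] using hn)]
        nlinarith

theorem g_pow_fix (s t : S) (θ : ℝ)
    (hst : B (ε s) (ε t) = - Real.cos θ) (hts : B (ε t) (ε s) = - Real.cos θ)
    (hθ : Real.sin θ ≠ 0) (k : ℕ) :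
    ((rrefl B ε h1 s * rrefl B ε h1 t) ^ k) (ε s)
        = (sin ((2*k+1) * θ) / sin θ) • ε s + (sin ((2*k) * θ) / sin θ) • ε t ∧
      ((rrefl B ε h1 s * rrefl B ε h1 t) ^ k) (ε t)
        = (- sin ((2*k) * θ) / sin θ) • ε s + (- sin ((2*k) * θ - θ) / sin θ) • ε t := by
  have key : ∀ x : ℝ, sin (x + θ) = 2 * cos θ * sin x - sin (x - θ) := by
    intro x; rw [sin_add, sin_sub]; ring
  induction k with
  | zero =>
    constructor
    · rw [pow_zero, equiv_one_apply]
      norm_num [div_self hθ]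
    · rw [pow_zero, equiv_one_apply]
      norm_num [sin_neg, div_self hθ]
  | succ k ih =>
    obtain ⟨hsk, htk⟩ := ih
    have k1 : sin ((2*(k:ℝ)+1) * θ + θ) = 2*cos θ*sin ((2*(k:ℝ)+1)*θ) - sin ((2*(k:ℝ))*θ) := by
      have h0 : (2*(k:ℝ))*θ = (2*(k:ℝ)+1)*θ - θ := by ring
      rw [key, h0]
    have k2 : sin ((2*(k:ℝ)+1) * θ + θ + θ)
        = 2*cos θ*sin ((2*(k:ℝ)+1)*θ + θ) - sin ((2*(k:ℝ)+1)*θ) := by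
      have h0 : (2*(k:ℝ)+1)*θ = ((2*(k:ℝ)+1)*θ + θ) - θ := by ring
      rw [key]
      rw [← h0]
    constructor
    · rw [pow_succ', equiv_mul_apply, hsk, equiv_mul_apply]
      simp only [rrefl_apply, map_add, map_sub, map_smul, LinearMap.add_apply,
        LinearMap.sub_apply, LinearMap.smul_apply, smul_eq_mul, hst, hts, h1]
      match_scalars
      · push_cast
        rw [show (2*((k:ℝ)+1)+1)*θ = (2*(k:ℝ)+1)*θ+θ+θ from by ring]
        linear_combination (- 2 * cos θ * k1 - k2) / sin θ
      · push_cast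
        rw [show (2*((k:ℝ)+1))*θ = (2*(k:ℝ)+1)*θ+θ from by ring]
        linear_combination - k1 / sin θ
    · rw [pow_succ', equiv_mul_apply, htk, equiv_mul_apply]
      simp only [rrefl_apply, map_add, map_sub, map_smul, LinearMap.add_apply,
        LinearMap.sub_apply, LinearMap.smul_apply, smul_eq_mul, hst, hts, h1]
      have k0 : sin ((2*(k:ℝ))*θ + θ) = 2*cos θ*sin ((2*(k:ℝ))*θ) - sin ((2*(k:ℝ))*θ - θ) :=
        key _
      have k1b : sin ((2*(k:ℝ))*θ + θ + θ)
          = 2*cos θ*sin ((2*(k:ℝ))*θ + θ) - sin ((2*(k:ℝ))*θ) := by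
        have h := key ((2*(k:ℝ))*θ + θ)
        rwa [show (2*(k:ℝ))*θ + θ - θ = (2*(k:ℝ))*θ from by ring] at h
      match_scalars
      · push_cast
        rw [show 2*((k:ℝ)+1)*θ = 2*(k:ℝ)*θ+θ+θ from by ring]
        linear_combination (2 * cos θ * k0 + k1b) / sin θ
      · push_cast
        rw [show 2*((k:ℝ)+1)*θ - θ = 2*(k:ℝ)*θ+θ from by ring]
        linear_combination k0 / sin θ

theorem rrefl_braid (s t : S) (m : ℕ) (hm : 2 ≤ m)
    (hst : B (ε s) (ε t) = - Real.cos (π/m)) (hts : B (ε t) (ε s) = - Real.cos (π/m)) :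
    (rrefl B ε h1 s * rrefl B ε h1 t) ^ m = 1 := by
  have hmr : (0:ℝ) < (m:ℝ) := by exact_mod_cast Nat.lt_of_lt_of_le Nat.zero_lt_two hm
  set θ := π / (m:ℝ) with hθdef
  have hθpos : 0 < θ := div_pos pi_pos hmr
  have hθlt : θ < π := div_lt_self pi_pos (by exact_mod_cast hm)
  have hsin : 0 < sin θ := sin_pos_of_pos_of_lt_pi hθpos hθlt
  obtain ⟨hgs, hgt⟩ := g_pow_fix B ε h1 s t θ hst hts (ne_of_gt hsin) m
  have h2m : (2*(m:ℝ)) * θ = 2*π := by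
    rw [hθdef]
    field_simp
  have v1 : sin ((2*(m:ℝ)+1) * θ) = sin θ := by
    have e : (2*(m:ℝ)+1)*θ = 2*π + θ := by rw [← h2m]; ring
    rw [e, sin_add, sin_two_pi, cos_two_pi]
    ring
  have v2 : sin ((2*(m:ℝ)) * θ) = 0 := by rw [h2m, sin_two_pi]
  have v3 : sin ((2*(m:ℝ)) * θ - θ) = - sin θ := by
    rw [h2m, sin_sub, sin_two_pi, cos_two_pi]
    ring
  rw [v1, v2] at hgs
  rw [v2, v3] at hgt
  rw [div_self (ne_of_gt hsin)] at hgs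
  have hgs' : ((rrefl B ε h1 s * rrefl B ε h1 t) ^ m) (ε s) = ε s := by
    rw [hgs]
    simp
  have hgt' : ((rrefl B ε h1 s * rrefl B ε h1 t) ^ m) (ε t) = ε t := by
    rw [hgt]
    rw [neg_neg, div_self (ne_of_gt hsin)]
    simp
  have hperp : ∀ x : V, B x (ε s) = 0 → B x (ε t) = 0 →
      ((rrefl B ε h1 s * rrefl B ε h1 t) ^ m) x = x := by
    intro x hxs hxt
    apply pow_fix
    rw [equiv_mul_apply, rrefl_apply B ε h1 t x, hxt]
    rw [show x - (2 * (0:ℝ)) • ε t = x by module]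
    rw [rrefl_apply B ε h1 s x, hxs]
    module
  have hc2 : 1 - cos θ ^ 2 ≠ 0 := by
    have := sin_sq_add_cos_sq θ
    intro h
    nlinarith
  apply LinearEquiv.toLinearMap_injective
  apply LinearMap.ext
  intro x
  set a := (B x (ε s) - (- cos θ) * B x (ε t)) / (1 - cos θ^2) with ha
  set b := (B x (ε t) - (- cos θ) * B x (ε s)) / (1 - cos θ^2) with hb
  set q := x - a • ε s - b • ε t with hq
  have hqs : B q (ε s) = 0 := by
    rw [hq]
    simp only [map_sub, map_smul, LinearMap.sub_apply, LinearMap.smul_apply, smul_eq_mul,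
      h1, hts]
    rw [ha, hb]
    field_simp
    ring
  have hqt : B q (ε t) = 0 := by
    rw [hq]
    simp only [map_sub, map_smul, LinearMap.sub_apply, LinearMap.smul_apply, smul_eq_mul,
      h1, hst]
    rw [ha, hb]
    field_simp
    ring
  have hx : x = a • ε s + b • ε t + q := by rw [hq]; module
  show ((rrefl B ε h1 s * rrefl B ε h1 t) ^ m) x = (1 : V ≃ₗ[ℝ] V) x
  rw [equiv_one_apply]
  conv_lhs => rw [hx]
  rw [map_add, map_add, map_smul, map_smul, hgs', hgt', hperp q hqs hqt, ← hx]

theorem isLiftable_rrefl (M : CoxeterMatrix S)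
    (hsym : ∀ x y : V, B x y = B y x)
    (hfin : ∀ s t : S, s ≠ t → M s t ≠ 0 → B (ε s) (ε t) = - Real.cos (π / (M s t : ℝ)))
    (hinf : ∀ s t : S, s ≠ t → M s t = 0 → B (ε s) (ε t) ≤ -1) :
    M.IsLiftable (rrefl B ε h1) := by
  intro s t
  rcases eq_or_ne s t with rfl | hst
  · rw [M.diagonal, pow_one, rrefl_mul_self]
  · rcases eq_or_ne (M s t) 0 with h0 | h0
    · rw [h0, pow_zero]
    · have hm : 2 ≤ M s t := by
        have := M.off_diagonal s t hst
        omega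
      refine rrefl_braid B ε h1 s t (M s t) hm (hfin s t hst h0) ?_
      rw [hsym]
      exact hfin s t hst h0

/-- The positive cone spanned by the `ε s`. -/
def Cone [Fintype S] : Set V := {v | ∃ c : S → ℝ, (∀ i, 0 ≤ c i) ∧ v = ∑ i, c i • ε i}

theorem eps_mem_Cone [Fintype S] (s : S) : ε s ∈ Cone ε := by
  classical
  refine ⟨fun i => if i = s then 1 else 0, fun i => by dsimp only; split <;> norm_num, ?_⟩
  simp [ite_smul]

theorem cone_comb [Fintype S] {a b : ℝ} {x y : V} (ha : 0 ≤ a) (hb : 0 ≤ b)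
    (hx : x ∈ Cone ε) (hy : y ∈ Cone ε) : a • x + b • y ∈ Cone ε := by
  obtain ⟨cx, hcx, rfl⟩ := hx
  obtain ⟨cy, hcy, rfl⟩ := hy
  refine ⟨fun i => a * cx i + b * cy i, fun i => by have := hcx i; have := hcy i; positivity, ?_⟩
  rw [Finset.smul_sum, Finset.smul_sum, ← Finset.sum_add_distrib]
  congr 1
  ext i
  rw [add_smul, smul_smul, smul_smul]

section WithCS

variable {M : CoxeterMatrix S} (cs : CoxeterSystem M W)

theorem coset_decomp : ∀ n : ℕ, ∀ w : W, cs.length w ≤ n → ∀ s t : S,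
    ∃ (v : W) (ω : List S), (∀ i ∈ ω, i = s ∨ i = t) ∧ w = v * cs.wordProd ω ∧
      cs.length w = cs.length v + ω.length ∧
      ¬ cs.IsRightDescent v s ∧ ¬ cs.IsRightDescent v t := by
  intro n
  induction n with
  | zero =>
    intro w hw s t
    have hw1 : w = 1 := cs.length_eq_zero_iff.mp (Nat.le_zero.mp hw)
    subst hw1
    exact ⟨1, [], by simp, by simp, by simp,
      cs.not_isRightDescent_one s, cs.not_isRightDescent_one t⟩
  | succ n ih =>
    intro w hw s t
    by_cases hs : cs.IsRightDescent w s
    · have hlen : cs.length (w * cs.simple s) + 1 = cs.length w := cs.isRightDescent_iff.mp hs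
      obtain ⟨v, ω, hmem, hdec, hl, hvs, hvt⟩ := ih (w * cs.simple s) (by omega) s t
      refine ⟨v, ω ++ [s], ?_, ?_, ?_, hvs, hvt⟩
      · intro i hi
        rcases List.mem_append.mp hi with h | h
        · exact hmem i h
        · left; simpa using h
      · rw [wordProd_append, wordProd_singleton, ← mul_assoc, ← hdec,
          cs.simple_mul_simple_cancel_right]
      · simp only [List.length_append, List.length_singleton]
        omega
    · by_cases ht : cs.IsRightDescent w t
      · have hlen : cs.length (w * cs.simple t) + 1 = cs.length w := cs.isRightDescent_iff.mp ht
        obtain ⟨v, ω, hmem, hdec, hl, hvs, hvt⟩ := ih (w * cs.simple t) (by omega) s t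
        refine ⟨v, ω ++ [t], ?_, ?_, ?_, hvs, hvt⟩
        · intro i hi
          rcases List.mem_append.mp hi with h | h
          · exact hmem i h
          · right; simpa using h
        · rw [wordProd_append, wordProd_singleton, ← mul_assoc, ← hdec,
            cs.simple_mul_simple_cancel_right]
        · simp only [List.length_append, List.length_singleton]
          omega
      · exact ⟨w, [], by simp, by simp, by simp, hs, ht⟩

theorem not_isReduced_dup (x : S) (l : List S) : ¬ cs.IsReduced (x :: x :: l) := by
  intro hl
  have h2 : cs.wordProd (x :: x :: l) = cs.wordProd l := by
    rw [wordProd_cons, wordProd_cons, cs.simple_mul_simple_cancel_left]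
  have h3 := cs.length_wordProd_le l
  unfold CoxeterSystem.IsReduced at hl
  rw [h2] at hl
  simp only [List.length_cons] at hl
  omega

theorem word_eq_alternating (s t : S) (hst : s ≠ t) :
    ∀ ω : List S, (∀ i ∈ ω, i = s ∨ i = t) → cs.IsReduced (ω ++ [s]) →
      ω = alternatingWord s t ω.length := by
  intro ω
  induction ω with
  | nil => intro _ _; rfl
  | cons u ω ih =>
    intro hmem hred
    have hred' : cs.IsReduced (ω ++ [s]) := by
      have := CoxeterSystem.IsReduced.drop (ω := (u :: ω) ++ [s]) hred 1
      simpa using this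
    have hω := ih (fun i hi => hmem i (List.mem_cons_of_mem u hi)) hred'
    have hu : u = s ∨ u = t := hmem u (List.mem_cons_self (a := u) (l := ω))
    rcases Nat.eq_zero_or_pos ω.length with h0 | hpos
    · have hnil : ω = [] := List.length_eq_zero_iff.mp h0
      subst hnil
      have hut : u = t := by
        rcases hu with rfl | rfl
        · exact absurd hred (not_isReduced_dup cs u [])
        · rfl
      subst hut
      rfl
    · obtain ⟨k, hk⟩ : ∃ k, ω.length = k + 1 := ⟨ω.length - 1, by omega⟩
      rw [hk, alternatingWord_succ'] at hω
      have hune : u ≠ (if Even k then t else s) := by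
        intro hcontra
        apply not_isReduced_dup cs u (alternatingWord s t k ++ [s])
        have : (u :: ω) ++ [s] = u :: u :: (alternatingWord s t k ++ [s]) := by
          rw [List.cons_append, hω, ← hcontra, List.cons_append]
        rwa [this] at hred
      have hlen2 : (u :: ω).length = (k + 1) + 1 := by simp [hk]
      rw [hlen2, alternatingWord_succ']
      congr 1
      · rcases hu with rfl | rfl
        · by_cases hke : Even k
          · simp [Nat.even_add_one, hke]
          · simp [hke] at hune
        · by_cases hke : Even k
          · simp [hke] at hune
          · simp [Nat.even_add_one, hke]
      · rw [alternatingWord_succ']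
        exact hω

theorem f_wordProd (f : W →* (V ≃ₗ[ℝ] V)) (hf : ∀ s : S, f (cs.simple s) = rrefl B ε h1 s)
    (ω : List S) : f (cs.wordProd ω) = Fw B ε h1 ω := by
  induction ω with
  | nil => rw [wordProd_nil, map_one, Fw_nil]
  | cons i ω ih => rw [wordProd_cons, map_mul, hf, ih, Fw_cons_mul]

theorem key_lemma [Fintype S]
    (hsym : ∀ x y : V, B x y = B y x)
    (hfin : ∀ s t : S, s ≠ t → M s t ≠ 0 → B (ε s) (ε t) = - Real.cos (π / (M s t : ℝ)))
    (hinf : ∀ s t : S, s ≠ t → M s t = 0 → B (ε s) (ε t) ≤ -1)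
    (f : W →* (V ≃ₗ[ℝ] V)) (hf : ∀ s : S, f (cs.simple s) = rrefl B ε h1 s) :
    ∀ n : ℕ, ∀ (w : W) (s : S), cs.length w ≤ n → ¬ cs.IsRightDescent w s →
      f w (ε s) ∈ Cone ε := by
  intro n
  induction n with
  | zero =>
    intro w s hw _
    have hw1 : w = 1 := cs.length_eq_zero_iff.mp (Nat.le_zero.mp hw)
    subst hw1
    rw [map_one, equiv_one_apply]
    exact eps_mem_Cone ε s
  | succ n ih =>
    intro w s hw hws
    rcases eq_or_ne w 1 with rfl | hne
    · rw [map_one, equiv_one_apply]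
      exact eps_mem_Cone ε s
    obtain ⟨t, ht⟩ := cs.exists_rightDescent_of_ne_one hne
    have hst : s ≠ t := by rintro rfl; exact hws ht
    obtain ⟨v, ω, hmem, hdec, hlen, hvs, hvt⟩ := coset_decomp cs (cs.length w) w le_rfl s t
    have hωne : ω ≠ [] := by
      rintro rfl
      rw [wordProd_nil, mul_one] at hdec
      subst hdec
      exact hvt ht
    have hωpos : 0 < ω.length := List.length_pos_iff.mpr hωne
    have hlv : cs.length v ≤ n := by omega
    have hws1 : cs.length (w * cs.simple s) = cs.length w + 1 := cs.not_isRightDescent_iff.mp hws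
    have hπω : cs.wordProd ω = v⁻¹ * w := by rw [hdec]; group
    have hred : cs.IsReduced (ω ++ [s]) := by
      have hle := cs.length_wordProd_le (ω ++ [s])
      have heq : cs.wordProd (ω ++ [s]) = v⁻¹ * (w * cs.simple s) := by
        rw [wordProd_append, wordProd_singleton, hπω]
        group
      have hge := cs.length_mul_ge_length_sub_length' v⁻¹ (w * cs.simple s)
      rw [← heq, cs.length_inv] at hge
      unfold CoxeterSystem.IsReduced
      simp only [List.length_append, List.length_singleton] at *
      omega
    have hωalt := word_eq_alternating cs s t hst ω hmem hred
    have hcoef : ∃ a b : ℝ, 0 ≤ a ∧ 0 ≤ b ∧ Fw B ε h1 ω (ε s) = a • ε s + b • ε t := by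
      rcases eq_or_ne (M s t) 0 with h0 | h0
      · obtain ⟨a, b, hab, ha, hb, _⟩ := Fw_alt_inf B ε h1 s t (hinf s t hst h0)
          (by rw [hsym]; exact hinf s t hst h0) ω.length
        rw [← hωalt] at hab
        exact ⟨a, b, ha, hb, hab⟩
      · have hm2 : 2 ≤ M s t := by have := M.off_diagonal s t hst; omega
        have hmr : (0:ℝ) < (M s t : ℝ) := by exact_mod_cast Nat.pos_of_ne_zero h0
        set θ := π / (M s t : ℝ) with hθdef
        have hθpos : 0 < θ := div_pos pi_pos hmr
        have hθlt : θ < π := div_lt_self pi_pos (by exact_mod_cast hm2)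
        have hsin : 0 < sin θ := sin_pos_of_pos_of_lt_pi hθpos hθlt
        have hb1 : ω.length + 1 ≤ M s t := by
          by_contra hgt
          push_neg at hgt
          have hnotred : ¬ cs.IsReduced (alternatingWord t s (ω.length + 1)) := by
            refine cs.not_isReduced_alternatingWord t s ?_ ?_
            · rw [M.symmetric]; exact h0
            · rw [M.symmetric]; omega
          apply hnotred
          have heq2 : ω ++ [s] = alternatingWord t s (ω.length + 1) := by
            rw [alternatingWord_succ, ← hωalt, List.concat_eq_append]
          rwa [heq2] at hred
        have htrig := Fw_alt_trig B ε h1 s t θ (hfin s t hst h0)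
          (by rw [hsym]; exact hfin s t hst h0) (ne_of_gt hsin) ω.length
        rw [← hωalt] at htrig
        have hmθ : (M s t : ℝ) * θ = π := by
          rw [hθdef]
          field_simp
        have hs1 : 0 ≤ sin ((ω.length : ℝ) * θ) := by
          apply sin_nonneg_of_nonneg_of_le_pi
          · positivity
          · rw [← hmθ]
            apply mul_le_mul_of_nonneg_right _ hθpos.le
            exact_mod_cast Nat.le_of_succ_le hb1
        have hs2 : 0 ≤ sin (((ω.length : ℝ) + 1) * θ) := by
          apply sin_nonneg_of_nonneg_of_le_pi
          · positivity
          · rw [← hmθ]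
            apply mul_le_mul_of_nonneg_right _ hθpos.le
            exact_mod_cast hb1
        by_cases hev : Even ω.length
        · rw [if_pos hev] at htrig
          exact ⟨_, _, div_nonneg hs2 hsin.le, div_nonneg hs1 hsin.le, htrig⟩
        · rw [if_neg hev] at htrig
          exact ⟨_, _, div_nonneg hs1 hsin.le, div_nonneg hs2 hsin.le, htrig⟩
    obtain ⟨a, b, ha, hb, hab⟩ := hcoef
    have hfw : f w (ε s) = a • (f v (ε s)) + b • (f v (ε t)) := by
      rw [hdec, map_mul, equiv_mul_apply, f_wordProd B ε h1 cs f hf, hab, map_add,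
        map_smul, map_smul]
    rw [hfw]
    exact cone_comb ε ha hb (ih v s hlv hvs) (ih v t hlv hvt)

end WithCS

end TitsAux

/-- the rooted representation exists and is faithful. -/
theorem rooted_representation_exists_and_faithful
    {S W V : Type*} [Fintype S] [Group W]
    [AddCommGroup V] [Module ℝ V] [FiniteDimensional ℝ V]
    (M : CoxeterMatrix S) (cs : CoxeterSystem M W)
    (B : V →ₗ[ℝ] V →ₗ[ℝ] ℝ) (ε : S → V) (hrb : IsRootBasis M B ε) :
    ∃ f : W →* (V ≃ₗ[ℝ] V),
      (∀ (s : S) (x : V), f (cs.simple s) x = x - (2 * B x (ε s)) • ε s) ∧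
      Function.Injective f := by
  obtain ⟨hsym, h1, hfin, hinf, χ, hχ⟩ := hrb
  have hlift := isLiftable_rrefl B ε h1 M hsym hfin hinf
  set f : W →* (V ≃ₗ[ℝ] V) := cs.lift ⟨rrefl B ε h1, hlift⟩ with hfdef
  have hf : ∀ s : S, f (cs.simple s) = rrefl B ε h1 s := fun s =>
    cs.lift_apply_simple hlift s
  refine ⟨f, ?_, ?_⟩
  · intro s x
    rw [hf s]
    exact rrefl_apply B ε h1 s x
  · rw [injective_iff_map_eq_one]
    intro w hw
    by_contra hne
    obtain ⟨s, hs⟩ := cs.exists_rightDescent_of_ne_one hne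
    have hnd : ¬ cs.IsRightDescent (w * cs.simple s) s :=
      (cs.isRightDescent_iff_not_isRightDescent_mul).mp hs
    have hmem := key_lemma B ε h1 cs hsym hfin hinf f hf
      (cs.length (w * cs.simple s)) (w * cs.simple s) s le_rfl hnd
    have hval : f (w * cs.simple s) (ε s) = - ε s := by
      rw [map_mul, hw, one_mul, hf s, rrefl_apply B ε h1 s, h1 s]
      module
    rw [hval] at hmem
    obtain ⟨c, hc, hceq⟩ := hmem
    have hχ1 : χ (- ε s) = ∑ i, c i * χ (ε i) := by
      rw [hceq, map_sum]
      simp only [map_smul, smul_eq_mul]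
    have hpos : (0:ℝ) < χ (ε s) := hχ s
    have hsum : 0 ≤ ∑ i, c i * χ (ε i) :=
      Finset.sum_nonneg fun i _ => mul_nonneg (hc i) (hχ i).le
    rw [map_neg] at hχ1
    linarith

end CoxeterFixedPoints
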